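/- arXiv:2408.15516 — 2 statements merged into one kernel-verified Lean document; each statement's English description precedes it below -/
import Mathlib

section
/- Let 0 < β < 1 and 0 < θ < π, and set γ = θ/2 − arcsin(√β · sin(θ/2)). Then 0 < γ < θ/2, and the point on the Apollonius circle of center (−βR/(1−β), 0) and radius √β·R/(1−β) at angle γ (measured from the center, i.e. the point (−βR/(1−β) + (√β·R/(1−β))·cos γ, (√β·R/(1−β))·sin γ)) lies on the ray from the origin making angle θ/2 with the positive x-axis; equivalently tan(θ/2) = ((√β/(1−β))·sin γ) / ((√β/(1−β))·cos γ − β/(1−β)). -/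
open Real

theorem arc_endpoint_on_sector_ray
    (β θ : ℝ) (hβ0 : 0 < β) (hβ1 : β < 1) (hθ0 : 0 < θ) (hθπ : θ < π) :
    let γ := θ / 2 - arcsin (Real.sqrt β * Real.sin (θ / 2))
    0 < γ ∧ γ < θ / 2 ∧
      Real.tan (θ / 2) =
        (Real.sqrt β / (1 - β) * Real.sin γ) /
          (Real.sqrt β / (1 - β) * Real.cos γ - β / (1 - β)) := by
  intro γ
  set t := θ / 2 with ht
  set s := Real.sqrt β with hs
  set a := Real.arcsin (s * Real.sin t) with ha
  have hs0 : 0 < s := Real.sqrt_pos.mpr hβ0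
  have hs1 : s < 1 := by
    rw [hs, show (1:ℝ) = Real.sqrt 1 by simp]
    exact Real.sqrt_lt_sqrt hβ0.le hβ1
  have hs2 : s ^ 2 = β := Real.sq_sqrt hβ0.le
  have ht0 : 0 < t := by rw [ht]; linarith
  have htpi : t < π / 2 := by rw [ht]; linarith
  have hsint : 0 < Real.sin t := Real.sin_pos_of_pos_of_lt_pi ht0 (by linarith [Real.pi_pos])
  have hsint1 : Real.sin t ≤ 1 := Real.sin_le_one t
  have hcost : 0 < Real.cos t := Real.cos_pos_of_mem_Ioo ⟨by linarith [Real.pi_pos], htpi⟩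
  have hx0 : 0 < s * Real.sin t := mul_pos hs0 hsint
  have hx1 : s * Real.sin t < 1 := by nlinarith
  have ha0 : 0 < a := Real.arcsin_pos.mpr hx0
  have hsina : Real.sin a = s * Real.sin t := Real.sin_arcsin (by linarith) hx1.le
  have hcosa : Real.cos a = Real.sqrt (1 - (s * Real.sin t) ^ 2) := Real.cos_arcsin _
  have hat : a < t := by
    have hmem_a : a ∈ Set.Icc (-(π/2)) (π/2) := Real.arcsin_mem_Icc _
    have hmem_t : t ∈ Set.Icc (-(π/2)) (π/2) := ⟨by linarith [Real.pi_pos], htpi.le⟩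
    have hlt : Real.sin a < Real.sin t := by rw [hsina]; nlinarith
    exact (Real.strictMonoOn_sin.lt_iff_lt hmem_a hmem_t).mp hlt
  have hγ0 : 0 < γ := by simp only [γ]; rw [← ht, ← hs, ← ha]; linarith
  have hγt : γ < t := by simp only [γ]; rw [← ht, ← hs, ← ha]; linarith
  have hγdef : γ = t - a := rfl
  refine ⟨hγ0, hγt, ?_⟩
  -- key trig facts
  have hpyt := Real.sin_sq_add_cos_sq t
  have hsqrt : s * Real.cos t < Real.sqrt (1 - (s * Real.sin t) ^ 2) := by
    rw [Real.lt_sqrt (by positivity)]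
    nlinarith
  have hcosγ : s < Real.cos γ := by
    rw [hγdef, Real.cos_sub, hsina, hcosa]
    nlinarith
  have hden : 0 < s * Real.cos γ - β := by nlinarith
  have h1β : (0:ℝ) < 1 - β := by linarith
  have key : Real.sin t * (s * Real.cos γ - β) = Real.cos t * (s * Real.sin γ) := by
    rw [hγdef, Real.cos_sub, Real.sin_sub, hsina]
    linear_combination s ^ 2 * Real.sin t * hpyt + Real.sin t * hs2
  rw [Real.tan_eq_sin_div_cos]
  rw [div_eq_div_iff hcost.ne' (by
    have : Real.sqrt β / (1 - β) * Real.cos γ - β / (1 - β) = (s * Real.cos γ - β) / (1 - β) := by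
      rw [← hs]; field_simp
    rw [this]
    positivity)]
  have expand : Real.sqrt β / (1 - β) * Real.cos γ - β / (1 - β) = (s * Real.cos γ - β) / (1 - β) := by
    rw [← hs]; field_simp
  rw [expand]
  field_simp
  linear_combination key
end

section
/- Let β = 10^{0.1(δ+δ_o)}. The map (δ, δ_o) ↦ α(β | θ) (with α defined piecewise as in the paper: α = 4β(γ−√β sin γ)/((1−β)² tan(θ/2)) for β<1 with γ = θ/2 − arcsin(√β sin(θ/2)), α = 1 at β = 1, α = 2 − α(1/β|θ) for β>1) is continuous at δ + δ_o = 0 for each fixed θ ∈ (0, π). -/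
open Real

open Filter Topology Set

/-- The serving-area ratio formula for `β < 1`. -/
noncomputable def alphaLt (θ β : ℝ) : ℝ :=
  4 * β * ((θ / 2 - arcsin (Real.sqrt β * Real.sin (θ / 2))) -
      Real.sqrt β * Real.sin (θ / 2 - arcsin (Real.sqrt β * Real.sin (θ / 2)))) /
    ((1 - β) ^ 2 * Real.tan (θ / 2))

/-- The serving-area ratio `α(β ∣ θ)`, defined piecewise as in the paper. -/
noncomputable def alpha (θ β : ℝ) : ℝ :=
  if β < 1 then alphaLt θ β
  else if β = 1 then 1
  else 2 - alphaLt θ (1 / β)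

/-- `(x - sin x)/x² → 0` as `x → 0⁺`. -/
lemma aux_sub_sin : Tendsto (fun x : ℝ => (x - Real.sin x) / x ^ 2) (𝓝[>] (0:ℝ)) (𝓝 0) := by
  apply squeeze_zero' (g := fun x : ℝ => x / 4)
  · filter_upwards [self_mem_nhdsWithin] with x (hx : 0 < x)
    have h := Real.sin_lt hx
    have hx2 : (0:ℝ) < x ^ 2 := by positivity
    exact div_nonneg (by linarith) hx2.le
  · filter_upwards [Ioo_mem_nhdsGT_of_mem (by norm_num : (0:ℝ) ∈ Ico (0:ℝ) 1)]
      with x hx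
    obtain ⟨hx0, hx1⟩ := hx
    have h := Real.sin_gt_sub_cube hx0
    have hx2 : (0:ℝ) < x ^ 2 := by positivity
    rw [div_le_div_iff₀ hx2 (by norm_num)]
    nlinarith
  · have : Tendsto (fun x : ℝ => x / 4) (𝓝 (0:ℝ)) (𝓝 (0 / 4)) :=
      (continuous_id.div_const 4).tendsto 0
    simpa using this.mono_left nhdsWithin_le_nhds

/-- `sin x / x → 1` as `x → 0`, `x ≠ 0`. -/
lemma aux_sin_div : Tendsto (fun x : ℝ => Real.sin x / x) (𝓝[≠] (0:ℝ)) (𝓝 1) := by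
  have h := hasDerivAt_iff_tendsto_slope.mp (Real.hasDerivAt_sin 0)
  rw [Real.cos_zero] at h
  refine h.congr' ?_
  filter_upwards [self_mem_nhdsWithin] with x hx
  simp [slope_def_field, div_eq_div_iff]

/-- The key limit: `alphaLt θ β → 1` as `β → 1⁻`. -/
lemma alphaLt_tendsto (θ : ℝ) (hθ0 : 0 < θ) (hθπ : π ≤ 2 * (π/2) → θ < π) (hθπ' : θ < π) :
    Tendsto (fun β => alphaLt θ β) (𝓝[<] (1:ℝ)) (𝓝 1) := by
  clear hθπ
  set t := θ / 2 with ht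
  have ht0 : 0 < t := by simp only [ht]; linarith
  have htπ : t < π / 2 := by simp only [ht]; linarith
  have hsin : 0 < Real.sin t :=
    Real.sin_pos_of_pos_of_lt_pi ht0 (by linarith [Real.pi_pos])
  have hcos : 0 < Real.cos t := Real.cos_pos_of_mem_Ioo ⟨by linarith [Real.pi_pos], htπ⟩
  have hsin1 : Real.sin t < 1 := by nlinarith [Real.sin_sq_add_cos_sq t]
  have htan : 0 < Real.tan t := by
    rw [Real.tan_eq_sin_div_cos]; positivity
  set s : ℝ → ℝ := fun β => Real.sqrt β with hs
  set γ : ℝ → ℝ := fun β => t - Real.arcsin (Real.sqrt β * Real.sin t) with hγ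
  have hmem : ∀ᶠ β in 𝓝[<] (1:ℝ), β ∈ Set.Ioo (0:ℝ) 1 :=
    Ioo_mem_nhdsLT_of_mem (by norm_num : (1:ℝ) ∈ Ioc (0:ℝ) 1)
  -- basic pointwise facts on (0,1)
  have hsIoo : ∀ β ∈ Set.Ioo (0:ℝ) 1, s β ∈ Set.Ioo (0:ℝ) 1 := by
    intro β ⟨hβ0, hβ1⟩
    refine ⟨Real.sqrt_pos.mpr hβ0, ?_⟩
    have := Real.sqrt_lt_sqrt hβ0.le hβ1
    simpa using this
  have hγpos : ∀ β ∈ Set.Ioo (0:ℝ) 1, 0 < γ β := by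
    intro β hβ
    obtain ⟨hs0, hs1⟩ := hsIoo β hβ
    have harg : s β * Real.sin t < Real.sin t := by nlinarith
    have harg0 : 0 ≤ s β * Real.sin t := by positivity
    have h1 : Real.arcsin (s β * Real.sin t) < Real.arcsin (Real.sin t) :=
      Real.strictMonoOn_arcsin ⟨by linarith, by nlinarith⟩ ⟨by linarith, hsin1.le⟩ harg
    rw [Real.arcsin_sin (by linarith [Real.pi_pos]) (by linarith)] at h1
    simp only [hγ]
    linarith
  -- limit of s
  have Ls : Tendsto s (𝓝[<] (1:ℝ)) (𝓝[<] (1:ℝ)) := by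
    rw [tendsto_nhdsWithin_iff]
    constructor
    · have : Tendsto s (𝓝 (1:ℝ)) (𝓝 (Real.sqrt 1)) := Real.continuous_sqrt.tendsto 1
      simpa using this.mono_left nhdsWithin_le_nhds
    · filter_upwards [hmem] with β hβ
      exact (hsIoo β hβ).2
  -- limit of γ
  have Lγ : Tendsto γ (𝓝[<] (1:ℝ)) (𝓝[>] (0:ℝ)) := by
    rw [tendsto_nhdsWithin_iff]
    constructor
    · have hc : Continuous γ :=
        continuous_const.sub (Real.continuous_arcsin.comp (Real.continuous_sqrt.mul continuous_const))
      have : Tendsto γ (𝓝 (1:ℝ)) (𝓝 (γ 1)) := hc.tendsto 1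
      have hγ1 : γ 1 = 0 := by
        simp only [hγ, Real.sqrt_one, one_mul]
        rw [Real.arcsin_sin (by linarith [Real.pi_pos]) (by linarith)]
        ring
      rw [hγ1] at this
      exact this.mono_left nhdsWithin_le_nhds
    · filter_upwards [hmem] with β hβ
      exact hγpos β hβ
  -- the slope limit : γ β / (1 - s β) → tan t
  have Lslope : Tendsto (fun β => γ β / (1 - s β)) (𝓝[<] (1:ℝ)) (𝓝 (Real.tan t)) := by
    set G : ℝ → ℝ := fun x => t - Real.arcsin (x * Real.sin t) with hG
    have hG1 : G 1 = 0 := by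
      simp only [hG, one_mul]
      rw [Real.arcsin_sin (by linarith [Real.pi_pos]) (by linarith)]
      ring
    have hd : HasDerivAt G (-Real.tan t) 1 := by
      have h1 : HasDerivAt (fun x : ℝ => x * Real.sin t) (Real.sin t) 1 := by
        simpa using (hasDerivAt_id (1:ℝ)).mul_const (Real.sin t)
      have harc : HasDerivAt Real.arcsin (1 / Real.sqrt (1 - Real.sin t ^ 2)) (Real.sin t) :=
        Real.hasDerivAt_arcsin (by linarith) (ne_of_lt hsin1)
      have harc' : HasDerivAt Real.arcsin (1 / Real.sqrt (1 - Real.sin t ^ 2))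
          ((fun x : ℝ => x * Real.sin t) 1) := by simpa using harc
      have h2 := harc'.comp 1 h1
      have hsq : Real.sqrt (1 - Real.sin t ^ 2) = Real.cos t := by
        rw [← Real.cos_sq']
        exact Real.sqrt_sq hcos.le
      have h3 : (1 / Real.sqrt (1 - Real.sin t ^ 2)) * Real.sin t = Real.tan t := by
        rw [hsq, Real.tan_eq_sin_div_cos]; ring
      rw [h3] at h2
      have h4 := (hasDerivAt_const (1:ℝ) t).sub h2
      rw [zero_sub] at h4
      exact h4
    have hslope := hasDerivAt_iff_tendsto_slope.mp hd
    have Ls' : Tendsto s (𝓝[<] (1:ℝ)) (𝓝[≠] (1:ℝ)) :=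
      Ls.mono_right (nhdsWithin_mono _ (fun x hx => ne_of_lt hx))
    have h5 : Tendsto (fun β => slope G 1 (s β)) (𝓝[<] (1:ℝ)) (𝓝 (-Real.tan t)) :=
      hslope.comp Ls'
    have h6 := h5.neg
    rw [neg_neg] at h6
    refine h6.congr' ?_
    filter_upwards [hmem] with β hβ
    have hs1 : s β ≠ 1 := ne_of_lt (hsIoo β hβ).2
    have hne : s β - 1 ≠ 0 := sub_ne_zero.mpr hs1
    have hne' : (1:ℝ) - s β ≠ 0 := sub_ne_zero.mpr (fun h => hs1 h.symm)
    have hγG : γ β = G (s β) := rfl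
    rw [slope_def_field, hG1, hγG]
    field_simp
    ring
  -- component limits
  have L4 : Tendsto (fun β => (γ β - Real.sin (γ β)) / (γ β) ^ 2) (𝓝[<] (1:ℝ)) (𝓝 0) :=
    aux_sub_sin.comp Lγ
  have L5 : Tendsto (fun β => Real.sin (γ β) / γ β) (𝓝[<] (1:ℝ)) (𝓝 1) :=
    aux_sin_div.comp (Lγ.mono_right (nhdsWithin_mono _ (fun x hx => ne_of_gt hx)))
  have Lid : Tendsto (fun β : ℝ => β) (𝓝[<] (1:ℝ)) (𝓝 1) := nhdsWithin_le_nhds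
  have Ls1 : Tendsto s (𝓝[<] (1:ℝ)) (𝓝 1) := Ls.mono_right nhdsWithin_le_nhds
  -- the big limit
  have hden : ((1:ℝ) + 1) ^ 2 * Real.tan t ≠ 0 := by positivity
  have LF : Tendsto (fun β =>
      4 * β * ((γ β - Real.sin (γ β)) / (γ β) ^ 2 * (γ β / (1 - s β)) ^ 2 +
        (Real.sin (γ β) / γ β) * (γ β / (1 - s β))) / ((1 + s β) ^ 2 * Real.tan t))
      (𝓝[<] (1:ℝ))
      (𝓝 (4 * 1 * (0 * Real.tan t ^ 2 + 1 * Real.tan t) / ((1 + 1) ^ 2 * Real.tan t))) := by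
    apply Tendsto.div
    · exact ((tendsto_const_nhds.mul Lid).mul
        ((L4.mul (Lslope.pow 2)).add (L5.mul Lslope)))
    · exact ((tendsto_const_nhds.add Ls1).pow 2).mul tendsto_const_nhds
    · exact hden
  have hval : 4 * 1 * (0 * Real.tan t ^ 2 + 1 * Real.tan t) / ((1 + 1) ^ 2 * Real.tan t) = 1 := by
    rw [show (4:ℝ) * 1 * (0 * Real.tan t ^ 2 + 1 * Real.tan t) = 4 * Real.tan t by ring,
        show ((1:ℝ) + 1) ^ 2 * Real.tan t = 4 * Real.tan t by ring]
    exact div_self (by positivity)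
  rw [hval] at LF
  refine LF.congr' ?_
  filter_upwards [hmem] with β hβ
  obtain ⟨hβ0, hβ1⟩ := hβ
  obtain ⟨hs0, hs1⟩ := hsIoo β ⟨hβ0, hβ1⟩
  have hγ0 := hγpos β ⟨hβ0, hβ1⟩
  simp only [hs, hγ] at hs0 hs1 hγ0 ⊢
  simp only [alphaLt, ← ht]
  set a := Real.sqrt β with ha
  set g := t - Real.arcsin (a * Real.sin t) with hgdef
  have ha2 : a ^ 2 = β := Real.sq_sqrt hβ0.le
  have h1s : (1:ℝ) - a ≠ 0 := sub_ne_zero.mpr (ne_of_gt (by linarith))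
  have h1s' : (1:ℝ) + a ≠ 0 := by positivity
  have hγne : g ≠ 0 := ne_of_gt hγ0
  have h1a : (1:ℝ) - a ^ 2 ≠ 0 := by nlinarith
  rw [← ha2]
  field_simp
  ring
  
theorem multiplier_continuous_at_no_adjustment
    (θ : ℝ) (hθ0 : 0 < θ) (hθπ : θ < π) (p : ℝ × ℝ) (hp : p.1 + p.2 = 0) :
    ContinuousAt (fun q : ℝ × ℝ => alpha θ ((10 : ℝ) ^ (0.1 * (q.1 + q.2)))) p := by
  have key : Tendsto (fun β => alphaLt θ β) (𝓝[<] (1:ℝ)) (𝓝 1) :=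
    alphaLt_tendsto θ hθ0 (fun _ => hθπ) hθπ
  have halpha1 : alpha θ 1 = 1 := by simp [alpha]
  -- continuity of alpha at 1
  have hcont : ContinuousAt (alpha θ) 1 := by
    rw [continuousAt_iff_continuous_left_right]
    have hleft : Tendsto (alpha θ) (𝓝[<] (1:ℝ)) (𝓝 1) := by
      refine key.congr' ?_
      filter_upwards [self_mem_nhdsWithin] with β (hβ : β < 1)
      simp [alpha, hβ]
    have hright : Tendsto (alpha θ) (𝓝[>] (1:ℝ)) (𝓝 1) := by
      have hinv : Tendsto (fun β : ℝ => 1 / β) (𝓝[>] (1:ℝ)) (𝓝[<] (1:ℝ)) := by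
        rw [tendsto_nhdsWithin_iff]
        constructor
        · have : Tendsto (fun β : ℝ => 1 / β) (𝓝 (1:ℝ)) (𝓝 (1 / 1)) :=
            (continuousAt_const.div continuousAt_id (by norm_num)).tendsto
          simpa using this.mono_left nhdsWithin_le_nhds
        · filter_upwards [self_mem_nhdsWithin] with β (hβ : 1 < β)
          exact mem_Iio.mpr ((div_lt_one (by linarith)).mpr hβ)
      have h2 : Tendsto (fun β : ℝ => 2 - alphaLt θ (1 / β)) (𝓝[>] (1:ℝ)) (𝓝 (2 - 1)) :=
        tendsto_const_nhds.sub (key.comp hinv)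
      norm_num at h2
      refine h2.congr' ?_
      filter_upwards [self_mem_nhdsWithin] with β (hβ : 1 < β)
      simp [alpha, not_lt.mpr hβ.le, ne_of_gt hβ]
    constructor
    · unfold ContinuousWithinAt
      rw [halpha1]
      have : (𝓝[Set.Iic (1:ℝ)] 1) = 𝓝[<] (1:ℝ)⊔ pure 1 := by
        rw [← Set.Iio_union_right, nhdsWithin_union, nhdsWithin_singleton]
      rw [this, tendsto_sup]
      refine ⟨hleft, ?_⟩
      have := tendsto_pure_nhds (alpha θ) 1
      rwa [halpha1] at this
    · unfold ContinuousWithinAt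
      rw [halpha1]
      have : (𝓝[Set.Ici (1:ℝ)] 1) = 𝓝[>] (1:ℝ) ⊔ pure 1 := by
        rw [← Set.Ioi_union_left, nhdsWithin_union, nhdsWithin_singleton]
      rw [this, tendsto_sup]
      refine ⟨hright, ?_⟩
      have := tendsto_pure_nhds (alpha θ) 1
      rwa [halpha1] at this
  -- the inner map and its value
  have hf : ContinuousAt (fun q : ℝ × ℝ => (10 : ℝ) ^ (0.1 * (q.1 + q.2))) p := by
    have h1 : ContinuousAt (fun q : ℝ × ℝ => 0.1 * (q.1 + q.2)) p := by fun_prop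
    exact (Real.continuousAt_const_rpow (by norm_num : (10:ℝ) ≠ 0)).comp h1
  have hfp : (10 : ℝ) ^ (0.1 * (p.1 + p.2)) = 1 := by
    rw [hp]; norm_num
  have := ContinuousAt.comp (by rw [hfp]; exact hcont) hf
  exact this
end
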